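/- Let k ≥ 1 be an integer and let a_1, …, a_l ∈ ℤ/kℤ be elements such that the ideal they generate is the whole ring ℤ/kℤ. Then there exist t_2, …, t_l ∈ ℤ/kℤ such that a_1 + t_2·a_2 + t_3·a_3 + ⋯ + t_l·a_l is invertible in ℤ/kℤ. -/
import Mathlib

/-- Product-of-primes trick: if gcd(a,b,n)=1 and n ≠ 0, some a + t*b is coprime to n. -/
lemma nat_lemma (a b n : ℕ) (hn : n ≠ 0) (h : Nat.gcd (Nat.gcd a b) n = 1) :
    ∃ t : ℕ, Nat.Coprime (a + t * b) n := by
  set t : ℕ := ∏ p ∈ n.primeFactors.filter (fun p => ¬ p ∣ a), p with ht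
  refine ⟨t, ?_⟩
  rw [Nat.coprime_iff_gcd_eq_one]
  by_contra hg
  obtain ⟨p, hp, hpdvd⟩ := Nat.exists_prime_and_dvd hg
  have hpab : p ∣ a + t * b := hpdvd.trans (Nat.gcd_dvd_left _ _)
  have hpn : p ∣ n := hpdvd.trans (Nat.gcd_dvd_right _ _)
  by_cases hpa : p ∣ a
  · -- then p ∤ b and p ∤ t
    have hpb : ¬ p ∣ b := by
      intro hpb
      have : p ∣ Nat.gcd (Nat.gcd a b) n :=
        Nat.dvd_gcd (Nat.dvd_gcd hpa hpb) hpn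
      rw [h] at this
      exact hp.one_lt.ne' (Nat.eq_one_of_dvd_one this)
    have hpt : ¬ p ∣ t := by
      intro hpt
      obtain ⟨q, hq, hpq⟩ := hp.prime.exists_mem_finset_dvd hpt
      simp only [Finset.mem_filter, Nat.mem_primeFactors] at hq
      have : p = q := (Nat.prime_dvd_prime_iff_eq hp hq.1.1).mp hpq
      exact hq.2 (this ▸ hpa)
    have : p ∣ t * b := (Nat.dvd_add_right hpa).mp hpab
    rcases hp.prime.dvd_mul.mp this with h' | h'
    · exact hpt h'
    · exact hpb h'
  · -- then p ∣ t, so p ∣ a, contradiction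
    have hpt : p ∣ t := by
      apply Finset.dvd_prod_of_mem
      simp only [Finset.mem_filter, Nat.mem_primeFactors]
      exact ⟨⟨hp, hpn, hn⟩, hpa⟩
    exact hpa ((Nat.dvd_add_right (hpt.mul_right b)).mp (by rwa [add_comm] at hpab))

lemma zmod_lemma (k : ℕ) (hk : 1 ≤ k) (x y : ZMod k) (h : IsCoprime x y) :
    ∃ t : ZMod k, IsUnit (x + t * y) := by
  have hk0 : k ≠ 0 := by omega
  haveI : NeZero k := ⟨hk0⟩
  set g := Nat.gcd (Nat.gcd x.val y.val) k with hg
  have hgk : g ∣ k := Nat.gcd_dvd_right _ _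
  have hg1 : g = 1 := by
    obtain ⟨u, v, huv⟩ := h
    have : NeZero g := ⟨fun h0 => hk0 (Nat.eq_zero_of_zero_dvd (h0 ▸ hgk))⟩
    have hchar : CharP (ZMod k) k := ZMod.charP k
    let f := ZMod.castHom hgk (ZMod g)
    have hx : f x = 0 := by
      have : x = (x.val : ZMod k) := (ZMod.natCast_zmod_val x).symm
      rw [this, map_natCast, ZMod.natCast_eq_zero_iff]
      exact (Nat.gcd_dvd_left _ _).trans (Nat.gcd_dvd_left _ _)
    have hy : f y = 0 := by
      have : y = (y.val : ZMod k) := (ZMod.natCast_zmod_val y).symm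
      rw [this, map_natCast, ZMod.natCast_eq_zero_iff]
      exact (Nat.gcd_dvd_left _ _).trans (Nat.gcd_dvd_right _ _)
    have h1 : (1 : ZMod g) = 0 := by
      have := congrArg f huv
      simpa [map_add, map_mul, hx, hy] using this.symm
    have : ((1 : ℕ) : ZMod g) = 0 := by simpa using h1
    rw [ZMod.natCast_eq_zero_iff] at this
    exact Nat.eq_one_of_dvd_one this
  obtain ⟨t, htc⟩ := nat_lemma x.val y.val k hk0 hg1
  refine ⟨(t : ZMod k), ?_⟩
  have := (ZMod.isUnit_iff_coprime (x.val + t * y.val) k).mpr htc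
  convert this using 1
  push_cast
  rw [ZMod.natCast_zmod_val, ZMod.natCast_zmod_val]

theorem exists_unit_combination (k l : ℕ) (hk : 1 ≤ k) (hl : 1 ≤ l) (a : ℕ → ZMod k)
    (h : Ideal.span (a '' Set.Icc 1 l) = ⊤) :
    ∃ t : ℕ → ZMod k, IsUnit (a 1 + ∑ i ∈ Finset.Icc 2 l, t i * a i) := by
  have h1 : (1 : ZMod k) ∈ Ideal.span (a '' Set.Icc 1 l) := h ▸ Submodule.mem_top
  rw [Set.image_eq_range a (Set.Icc 1 l)] at h1
  obtain ⟨c, hc⟩ := (Submodule.mem_span_range_iff_exists_fun (ZMod k)).mp h1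
  set c' : ℕ → ZMod k := fun i => if hi : i ∈ Set.Icc 1 l then c ⟨i, hi⟩ else 0 with hc'
  have hsum : ∑ i ∈ Finset.Icc 1 l, c' i * a i = 1 := by
    rw [← hc]
    rw [Finset.sum_subtype (Finset.Icc 1 l) (p := fun x => x ∈ Set.Icc 1 l)
      (by intro x; simp) (fun i => c' i * a i)]
    apply Finset.sum_congr rfl
    intro i _
    simp only [hc', dif_pos i.2, smul_eq_mul]
  have hins : Finset.Icc 1 l = insert 1 (Finset.Icc 2 l) := by
    ext x; simp only [Finset.mem_Icc, Finset.mem_insert]; omega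
  rw [hins, Finset.sum_insert (by simp)] at hsum
  set y : ZMod k := ∑ i ∈ Finset.Icc 2 l, c' i * a i with hy
  have hcop : IsCoprime (a 1) y := ⟨c' 1, 1, by rw [one_mul]; exact hsum⟩
  obtain ⟨t, ht⟩ := zmod_lemma k hk (a 1) y hcop
  refine ⟨fun i => t * c' i, ?_⟩
  have : ∑ i ∈ Finset.Icc 2 l, (t * c' i) * a i = t * y := by
    rw [hy, Finset.mul_sum]
    exact Finset.sum_congr rfl fun i _ => by ring
  rwa [this]
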